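/- Let T be a spanning tree of a balanced bipartite graph G = (V+, V-; E). Then the following are equivalent: (1) T contains a perfect matching M of G such that the digraph obtained by orienting the edges of T \ M from V+ to V- and the edges of M from V- to V+ is a spanning in-arborescence of the auxiliary digraph G_M; (2) there exists a vertex r ∈ V+ with degree 1 in T such that every other vertex of V+ has degree exactly 2 in T. -/

import Mathlib

open Sum

/-- The simple graph on `α ⊕ β` determined by an edge set `T ⊆ α × β`. -/
def sg {α β : Type*} (T : Set (α × β)) : SimpleGraph (α ⊕ β) :=
  SimpleGraph.fromRel (fun u v => ∃ a b, u = inl a ∧ v = inr b ∧ (a, b) ∈ T)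

/-- Degree of `a ∈ V⁺` in the edge set `T`. -/
noncomputable def degP {α β : Type*} (T : Set (α × β)) (a : α) : ℕ :=
  {b : β | (a, b) ∈ T}.ncard

/-- Arc relation of the auxiliary digraph: edges of `E` oriented from `V⁺` to `V⁻`,
edges of `M` oriented from `V⁻` to `V⁺`. -/
def Step {α β : Type*} (E M : Set (α × β)) : (α ⊕ β) → (α ⊕ β) → Prop
  | inl a, inr b => (a, b) ∈ E
  | inr b, inl a => (a, b) ∈ M
  | _, _ => False

def auxArcs {α β : Type*} (E M : Set (α × β)) : Set ((α ⊕ β) × (α ⊕ β)) :=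
  {p | Step E M p.1 p.2}

def IsPerfectMatching {α β : Type*} (E M : Set (α × β)) : Prop :=
  M ⊆ E ∧ (∀ a : α, ∃! b : β, (a, b) ∈ M) ∧ (∀ b : β, ∃! a : α, (a, b) ∈ M)

def WeaklyConnected {V : Type*} (B : Set (V × V)) : Prop :=
  ∀ u v : V, Relation.ReflTransGen (fun x y => (x, y) ∈ B ∨ (y, x) ∈ B) u v

/-- `B` is a spanning in-arborescence rooted at `r`. -/
def IsInArb {V : Type*} (B : Set (V × V)) (r : V) : Prop :=
  WeaklyConnected B ∧ (¬ ∃ w, (r, w) ∈ B) ∧ ∀ v : V, v ≠ r → ∃! w, (v, w) ∈ B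

section helpers

open SimpleGraph

variable {α β : Type*} {T : Set (α × β)}

lemma adj_inl_iff {a : α} {w : α ⊕ β} :
    (sg T).Adj (inl a) w ↔ ∃ b, w = inr b ∧ (a, b) ∈ T := by
  cases w with
  | inl a' => simp [sg, SimpleGraph.fromRel_adj]
  | inr b => simp [sg, SimpleGraph.fromRel_adj]

lemma adj_inr_iff {b : β} {w : α ⊕ β} :
    (sg T).Adj (inr b) w ↔ ∃ a, w = inl a ∧ (a, b) ∈ T := by
  cases w with
  | inl a => simp [sg, SimpleGraph.fromRel_adj]
  | inr b' => simp [sg, SimpleGraph.fromRel_adj]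

lemma reverse_dir (T : Set (α × β)) (htree : (sg T).IsTree)
    (r : α) (hr1 : degP T r = 1) (hr2 : ∀ a : α, a ≠ r → degP T a = 2) :
    ∃ M : Set (α × β), M ⊆ T ∧ (∀ a : α, ∃! b : β, (a, b) ∈ M) ∧
      (∀ b : β, ∃! a : α, (a, b) ∈ M) ∧ IsInArb (auxArcs (T \ M) M) (inl r) := by
  classical
  choose pth hIs huniq using fun v => htree.existsUnique_path v (inl r)
  set par : α ⊕ β → α ⊕ β := fun v => (pth v).getVert 1 with hpardef
  set M : Set (α × β) := {p : α × β | p ∈ T ∧ par (inr p.2) = inl p.1} with hMdef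
  have pth_root : pth (inl r) = Walk.nil := (huniq _ _ Walk.IsPath.nil).symm
  have par_root : par (inl r) = inl r := by
    rw [hpardef]; simp only [pth_root]; rfl
  have hcons : ∀ v, v ≠ inl r →
      ∃ h : (sg T).Adj v (par v), pth v = Walk.cons h (pth (par v)) := by
    intro v hv
    obtain ⟨w, hadj, q, hq⟩ := Walk.exists_eq_cons_of_ne hv (pth v)
    have hw : par v = w := by
      rw [hpardef]; simp only [hq, Walk.getVert_cons_succ, Walk.getVert_zero]
    subst hw
    have hqp : q.IsPath := by
      have := hIs v; rw [hq] at this; exact this.of_cons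
    rw [huniq _ q hqp] at hq
    exact ⟨hadj, hq⟩
  have fact1 : ∀ u v, (sg T).Adj v u → par v = u ∨ par u = v := by
    intro u v hadj
    by_cases hv : v = inl r
    · right
      subst hv
      have hu : u ≠ inl r := fun h => (sg T).irrefl (h ▸ hadj)
      have hp : (Walk.cons hadj.symm Walk.nil : (sg T).Walk u (inl r)).IsPath := by
        rw [Walk.cons_isPath_iff]
        exact ⟨Walk.IsPath.nil, by simpa using hu⟩
      have := huniq u _ hp
      rw [hpardef]; simp only [← this, Walk.getVert_cons_succ, Walk.getVert_zero]
    · rcases Classical.em (v ∈ (pth u).support) with hmem | hmem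
      · right
        have hd := (hIs u).dropUntil hmem
        have hdu : (pth u).dropUntil v hmem = pth v := huniq v _ hd
        have ht := (hIs u).takeUntil hmem
        have h2 : (Walk.cons hadj.symm Walk.nil : (sg T).Walk u v).IsPath := by
          rw [Walk.cons_isPath_iff]
          exact ⟨Walk.IsPath.nil, by simpa using hadj.ne'⟩
        have hsingle : (pth u).takeUntil v hmem = Walk.cons hadj.symm Walk.nil :=
          Subtype.ext_iff.1 (htree.IsAcyclic.path_unique ⟨_, ht⟩ ⟨_, h2⟩)
        have hspec := (pth u).take_spec hmem
        rw [hsingle, hdu] at hspec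
        rw [hpardef]
        simp only [← hspec, Walk.cons_append, Walk.nil_append,
          Walk.getVert_cons_succ, Walk.getVert_zero]
      · left
        have hp : (Walk.cons hadj (pth u)).IsPath := by
          rw [Walk.cons_isPath_iff]; exact ⟨hIs u, hmem⟩
        have := huniq v _ hp
        rw [hpardef]
        simp only [← this, Walk.getVert_cons_succ, Walk.getVert_zero]
  have fact3 : ∀ v u, v ≠ inl r → par v = u → par u ≠ v := by
    intro v u hv hpv hcontra
    by_cases hu : u = inl r
    · subst hu; rw [par_root] at hcontra; exact hv hcontra.symm
    · obtain ⟨h1, e1⟩ := hcons v hv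
      obtain ⟨h2, e2⟩ := hcons u hu
      have hnv : v ∉ (pth (par v)).support := by
        have := hIs v; rw [e1, Walk.cons_isPath_iff] at this; exact this.2
      rw [hpv] at hnv
      apply hnv
      rw [Walk.mem_support_iff_exists_getVert]
      exact ⟨1, hcontra, by rw [e2, Walk.length_cons]; exact Nat.succ_le_succ (Nat.zero_le _)⟩
  have arc_char : ∀ x y : α ⊕ β, (x, y) ∈ auxArcs (T \ M) M ↔ (x ≠ inl r ∧ y = par x) := by
    intro x y
    constructor
    · intro hxy
      match x, y with
      | inl a, inr b =>
        have hb : (a, b) ∈ T \ M := hxy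
        have hadj : (sg T).Adj (inl a) (inr b) := adj_inl_iff.mpr ⟨b, rfl, hb.1⟩
        rcases fact1 (inr b) (inl a) hadj with h | h
        · refine ⟨?_, h.symm⟩
          intro hh
          rw [hh, par_root] at h
          simp at h
        · exact absurd (⟨hb.1, h⟩ : (a, b) ∈ M) hb.2
      | inr b, inl a =>
        have hm : (a, b) ∈ M := hxy
        exact ⟨by simp, hm.2.symm⟩
      | inl _, inl _ => exact hxy.elim
      | inr _, inr _ => exact hxy.elim
    · rintro ⟨hx, rfl⟩
      match x with
      | inl a =>
        obtain ⟨h, -⟩ := hcons (inl a) hx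
        obtain ⟨b, hb, hbT⟩ := adj_inl_iff.mp h
        rw [hb]
        have : (a, b) ∈ T \ M := ⟨hbT, fun hm => fact3 (inl a) (inr b) hx hb hm.2⟩
        exact this
      | inr b =>
        obtain ⟨h, -⟩ := hcons (inr b) hx
        obtain ⟨a, ha, haT⟩ := adj_inr_iff.mp h
        rw [ha]
        have : (a, b) ∈ M := ⟨haT, ha⟩
        exact this
  have hMT : M ⊆ T := fun p hp => hp.1
  have hMl : ∀ a : α, ∃! b : β, (a, b) ∈ M := by
    intro a
    by_cases h : a = r
    · subst h
      rw [degP, Set.ncard_eq_one] at hr1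
      obtain ⟨b₀, hb₀⟩ := hr1
      have hbT : (a, b₀) ∈ T := by
        have : b₀ ∈ {b : β | (a, b) ∈ T} := by rw [hb₀]; rfl
        exact this
      have hadj : (sg T).Adj (inr b₀) (inl a) := adj_inr_iff.mpr ⟨a, rfl, hbT⟩
      have hpar : par (inr b₀) = inl a := by
        rcases fact1 (inl a) (inr b₀) hadj with h | h
        · exact h
        · rw [par_root] at h; exact (by simp at h : False).elim
      refine ⟨b₀, ⟨hbT, hpar⟩, fun b hb => ?_⟩
      have : b ∈ {x : β | (a, x) ∈ T} := hb.1
      rw [hb₀] at this; exact this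
    · have hd := hr2 a h
      rw [degP, Set.ncard_eq_two] at hd
      obtain ⟨b₁, b₂, hne, hset⟩ := hd
      have hax : (inl a : α ⊕ β) ≠ inl r := by simpa using h
      obtain ⟨hadj, -⟩ := hcons (inl a) hax
      obtain ⟨bs, hbs, hbsT⟩ := adj_inl_iff.mp hadj
      have hbmem : bs ∈ ({b₁, b₂} : Set β) := hset ▸ hbsT
      have main : ∀ bC bP : β, bC ≠ bP → ({b : β | (a, b) ∈ T} = {bC, bP}) →
          par (inl a) = inr bP → ∃! b : β, (a, b) ∈ M := by
        intro bC bP hne' hset' hpar'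
        have hCT : (a, bC) ∈ T := by
          have : bC ∈ {b : β | (a, b) ∈ T} := by rw [hset']; exact Or.inl rfl
          exact this
        have hparC : par (inr bC) = inl a := by
          have hadjC : (sg T).Adj (inl a) (inr bC) := adj_inl_iff.mpr ⟨bC, rfl, hCT⟩
          rcases fact1 (inr bC) (inl a) hadjC with hh | hh
          · rw [hpar'] at hh
            exact absurd (by injection hh) hne'.symm
          · exact hh
        refine ⟨bC, ⟨hCT, hparC⟩, fun b hb => ?_⟩
        have hbm : b ∈ ({bC, bP} : Set β) := hset' ▸ hb.1
        rcases hbm with h1 | h2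
        · exact h1
        · exfalso
          have : b = bP := h2
          subst this
          exact fact3 (inl a) (inr b) hax hpar' hb.2
      rcases hbmem with h1 | h2
      · refine main b₂ b₁ hne.symm ?_ ?_
        · rw [hset]; exact Set.pair_comm b₁ b₂
        · rw [hbs, (h1 : bs = b₁)]
      · refine main b₁ b₂ hne hset ?_
        rw [hbs, (h2 : bs = b₂)]
  have hMr : ∀ b : β, ∃! a : α, (a, b) ∈ M := by
    intro b
    obtain ⟨hadj, -⟩ := hcons (inr b) (by simp)
    obtain ⟨a, ha, haT⟩ := adj_inr_iff.mp hadj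
    refine ⟨a, ⟨haT, ha⟩, fun a' ha' => ?_⟩
    have : (inl a' : α ⊕ β) = inl a := by rw [← ha'.2, ha]
    injection this
  have reach : ∀ v : α ⊕ β, Relation.ReflTransGen
      (fun x y => (x, y) ∈ auxArcs (T \ M) M ∨ (y, x) ∈ auxArcs (T \ M) M) v (inl r) := by
    have key : ∀ n : ℕ, ∀ v : α ⊕ β, (pth v).length = n → Relation.ReflTransGen
        (fun x y => (x, y) ∈ auxArcs (T \ M) M ∨ (y, x) ∈ auxArcs (T \ M) M) v (inl r) := by
      intro n
      induction n using Nat.strong_induction_on with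
      | _ n ih =>
        intro v hn
        by_cases hv : v = inl r
        · subst hv; exact Relation.ReflTransGen.refl
        · obtain ⟨h, e⟩ := hcons v hv
          have harc : (v, par v) ∈ auxArcs (T \ M) M := (arc_char v (par v)).mpr ⟨hv, rfl⟩
          have hlen : (pth (par v)).length < n := by
            rw [← hn, e]; simp [Walk.length_cons]
          exact Relation.ReflTransGen.head (Or.inl harc) (ih _ hlen (par v) rfl)
    exact fun v => key _ v rfl
  refine ⟨M, hMT, hMl, hMr, ?_, ?_, ?_⟩
  · intro u v
    have hsymm : Symmetric (fun x y => (x, y) ∈ auxArcs (T \ M) M ∨ (y, x) ∈ auxArcs (T \ M) M) :=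
      fun x y h => h.symm
    exact (reach u).trans ((@Relation.ReflTransGen.stdSymm _ _ ⟨hsymm⟩).symm _ _ (reach v))
  · rintro ⟨w, hw⟩
    exact ((arc_char _ _).mp hw).1 rfl
  · intro v hv
    exact ⟨par v, (arc_char _ _).mpr ⟨hv, rfl⟩, fun w hw => ((arc_char _ _).mp hw).2⟩

end helpers

theorem stmt5 {α β : Type*} [Fintype α] [Fintype β]
    (hbal : Fintype.card α = Fintype.card β)
    (E T : Set (α × β)) (hTE : T ⊆ E) (htree : (sg T).IsTree) :
    (∃ M : Set (α × β), IsPerfectMatching E M ∧ M ⊆ T ∧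
        auxArcs (T \ M) M ⊆ auxArcs E M ∧
        ∃ r : α ⊕ β, IsInArb (auxArcs (T \ M) M) r) ↔
      (∃ r : α, degP T r = 1 ∧ ∀ a : α, a ≠ r → degP T a = 2) := by
  constructor
  · rintro ⟨M, ⟨hME, hMl, hMr⟩, hMT, -, ρ, hconn, hroot, hout⟩
    obtain ⟨r₀, rfl⟩ : ∃ r₀, ρ = inl r₀ := by
      cases ρ with
      | inl a => exact ⟨a, rfl⟩
      | inr b =>
        obtain ⟨a, ha, -⟩ := hMr b
        exact absurd ⟨inl a, ha⟩ hroot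
    refine ⟨r₀, ?_, ?_⟩
    · obtain ⟨b₀, hb₀, hu⟩ := hMl r₀
      have hset : {b : β | (r₀, b) ∈ T} = {b₀} := by
        ext b
        simp only [Set.mem_setOf_eq, Set.mem_singleton_iff]
        constructor
        · intro hb
          by_cases hm : (r₀, b) ∈ M
          · exact hu b hm
          · exact absurd ⟨inr b, (⟨hb, hm⟩ : (r₀, b) ∈ T \ M)⟩ hroot
        · rintro rfl; exact hMT hb₀
      rw [degP, hset, Set.ncard_singleton]
    · intro a ha
      obtain ⟨b₂, hb₂, hu₂⟩ := hMl a
      obtain ⟨w, hw, hu₁⟩ := hout (inl a) (by simpa using ha)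
      obtain ⟨b₁, rfl⟩ : ∃ b₁, w = inr b₁ := by
        cases w with
        | inr b => exact ⟨b, rfl⟩
        | inl a' => exact (hw : Step (T \ M) M (inl a) (inl a')).elim
      have hw1 : (a, b₁) ∈ T \ M := hw
      have hne : b₁ ≠ b₂ := fun h => hw1.2 (h ▸ hb₂)
      have hset : {b : β | (a, b) ∈ T} = {b₁, b₂} := by
        ext b
        simp only [Set.mem_setOf_eq, Set.mem_insert_iff, Set.mem_singleton_iff]
        constructor
        · intro hb
          by_cases hm : (a, b) ∈ M
          · exact Or.inr (hu₂ b hm)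
          · left
            have := hu₁ (inr b) (⟨hb, hm⟩ : (a, b) ∈ T \ M)
            injection this
        · rintro (rfl | rfl)
          · exact hw1.1
          · exact hMT hb₂
      rw [degP, hset, Set.ncard_pair hne]
  · rintro ⟨r, hr1, hr2⟩
    obtain ⟨M, hMT, hMl, hMr, harb⟩ := reverse_dir T htree r hr1 hr2
    refine ⟨M, ⟨fun p hp => hTE (hMT hp), hMl, hMr⟩, hMT, ?_, inl r, harb⟩
    rintro ⟨x, y⟩ h
    match x, y with
    | inl a, inr b => exact hTE ((h : (a, b) ∈ T \ M).1)
    | inr b, inl a => exact h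
    | inl _, inl _ => exact h.elim
    | inr _, inr _ => exact h.elim
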